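/- arXiv:1507.01096 — 3 statements merged into one kernel-verified Lean document; each statement's English description precedes it below -/
import Mathlib

section
/- The set H₂ = {±(1,0), ±(0,1), ±(1,1), ±(1,3)} is a nonseparating subset of ℤ/4ℤ ⊕ ℤ/4ℤ. -/
def middleTwoEq (c : Fin 4 → ℕ) : Prop :=
  (Multiset.sort ({c 0, c 1, c 2, c 3} : Multiset ℕ) (· ≤ ·)).getD 1 0 =
  (Multiset.sort ({c 0, c 1, c 2, c 3} : Multiset ℕ) (· ≤ ·)).getD 2 0

abbrev G4 := ZMod 4 × ZMod 4

lemma nsmul4 : ∀ b : G4, (4:ℕ) • b = 0 := by decide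

lemma smul4 (b : G4) : (4:ℤ) • b = 0 := by
  have : ((4:ℕ):ℤ) • b = (4:ℕ) • b := natCast_zsmul b 4
  rw [show ((4:ℕ):ℤ) = (4:ℤ) by norm_num] at this
  rw [this]; exact nsmul4 b

lemma zsmul_red (a : G4) (k : ℤ) : k • a = ((k % 4).toNat : ℕ) • a := by
  have h4 : (4:ℤ) • a = 0 := smul4 a
  have hk : k = 4 * (k / 4) + k % 4 := (Int.mul_ediv_add_emod k 4).symm
  calc k • a = (4 * (k / 4) + k % 4) • a := by rw [← hk]
    _ = (4 * (k / 4)) • a + (k % 4) • a := add_zsmul a _ _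
    _ = (k / 4) • ((4:ℤ) • a) + (k % 4) • a := by rw [mul_comm, mul_zsmul]
    _ = (k % 4) • a := by rw [h4, smul_zero, zero_add]
    _ = ((k % 4).toNat : ℤ) • a := by
        rw [Int.toNat_of_nonneg (Int.emod_nonneg k (by norm_num))]
    _ = ((k % 4).toNat : ℕ) • a := natCast_zsmul a _

lemma toNat_lt4 (k : ℤ) : (k % 4).toNat < 4 := by omega

def mem4 (b x : G4) : Prop := ∃ k : Fin 4, (k : ℕ) • b = x

instance (b x : G4) : Decidable (mem4 b x) := by unfold mem4; infer_instance

lemma mem_zmult_iff (b x : G4) : x ∈ AddSubgroup.zmultiples b ↔ mem4 b x := by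
  rw [AddSubgroup.mem_zmultiples_iff]
  constructor
  · rintro ⟨k, rfl⟩
    exact ⟨⟨(k % 4).toNat, toNat_lt4 k⟩, (zsmul_red b k).symm⟩
  · rintro ⟨k, rfl⟩
    exact ⟨(k : ℕ), natCast_zsmul b k⟩

def nb (b : G4) : ℕ := (Finset.univ.filter (mem4 b)).card

lemma nb_pos : ∀ b : G4, 0 < nb b := by decide

lemma card_zmult (b : G4) : Nat.card (AddSubgroup.zmultiples b) = nb b := by
  have hset : (AddSubgroup.zmultiples b : Set G4) = ↑(Finset.univ.filter (mem4 b)) := by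
    ext x; simp [mem_zmult_iff]
  rw [← SetLike.coe_sort_coe, hset, Nat.card_coe_set_eq, Set.ncard_coe_finset]; rfl

lemma quot_card (b : G4) :
    Nat.card (G4 ⧸ AddSubgroup.zmultiples b) = 16 / nb b := by
  have h := AddSubgroup.card_eq_card_quotient_mul_card_addSubgroup (AddSubgroup.zmultiples b)
  rw [card_zmult] at h
  have hG : Nat.card G4 = 16 := by
    rw [Nat.card_eq_fintype_card]; decide
  rw [hG] at h
  exact (Nat.div_eq_of_eq_mul_left (nb_pos b) h).symm

def hT : Fin 4 → G4 := ![(1, 0), (0, 1), (1, 1), (1, 3)]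

def Gen (b a : G4) : Prop := ∀ x : G4, ∃ k : Fin 4, mem4 b (x - (k : ℕ) • a)

instance (b a : G4) : Decidable (Gen b a) := by unfold Gen; infer_instance

def m2eq (c0 c1 c2 c3 : ℕ) : Prop :=
  (List.insertionSort (· ≤ ·) [c0, c1, c2, c3]).getD 1 0 =
  (List.insertionSort (· ≤ ·) [c0, c1, c2, c3]).getD 2 0

instance (c0 c1 c2 c3 : ℕ) : Decidable (m2eq c0 c1 c2 c3) := by unfold m2eq; infer_instance

lemma sort_eq_insertionSort (l : List ℕ) :
    Multiset.sort (↑l : Multiset ℕ) (· ≤ ·) = List.insertionSort (· ≤ ·) l := by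
  apply List.Perm.eq_of_pairwise' (r := fun x1 x2 => x1 ≤ x2)
  · exact Multiset.pairwise_sort _ _
  · exact List.pairwise_insertionSort _ _
  · exact (Multiset.coe_eq_coe.mp (Multiset.sort_eq (↑l : Multiset ℕ) _)).trans
      (List.perm_insertionSort (· ≤ ·) l).symm

lemma middleTwoEq_iff (c : Fin 4 → ℕ) :
    middleTwoEq c ↔ m2eq (c 0) (c 1) (c 2) (c 3) := by
  have : ({c 0, c 1, c 2, c 3} : Multiset ℕ) = (↑[c 0, c 1, c 2, c 3] : Multiset ℕ) := rfl
  unfold middleTwoEq m2eq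
  rw [this, sort_eq_insertionSort]

def cnd (b a : G4) (m : ℕ) (x : G4) (ci : ℕ) : Prop :=
  ci ≤ m ∧ (mem4 b (x - ci • a) ∨ mem4 b (x + ci • a))

instance (b a : G4) (m : ℕ) (x : G4) (ci : ℕ) : Decidable (cnd b a m x ci) := by
  unfold cnd; infer_instance

def Pmain : Prop := ∀ b a : G4, Gen b a → ∀ m : Fin 9, (m : ℕ) = (16 / nb b) / 2 →
  ∀ c0 : Fin 9, cnd b a m (1, 0) c0 → ∀ c1 : Fin 9, cnd b a m (0, 1) c1 →
  ∀ c2 : Fin 9, cnd b a m (1, 1) c2 → ∀ c3 : Fin 9, cnd b a m (1, 3) c3 →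
    m2eq c0 c1 c2 c3

set_option maxHeartbeats 4000000 in
set_option maxRecDepth 100000 in
lemma pmain : Pmain := by unfold Pmain; decide

/-- `c` is the coset number of the pair `{x, -x}` relative to `B` and the
generator `a + B` of `A ⧸ B`: `0 ≤ c ≤ n/2` and `(c • a + B) ∩ {x, -x} ≠ ∅`. -/
def IsCosetNum {A : Type*} [AddCommGroup A] (B : AddSubgroup A) (a x : A) (c : ℕ) : Prop :=
  c ≤ Nat.card (A ⧸ B) / 2 ∧ (x - c • a ∈ B ∨ x + c • a ∈ B)

/-- The four pairs `{± h i}` are disjoint and for every cyclic subgroup `B` with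
cyclic quotient and every generator of the quotient, the middle two of the four
coset numbers agree. -/
def NonsepTuple {A : Type*} [AddCommGroup A] (h : Fin 4 → A) : Prop :=
  (∀ i j : Fin 4, i ≠ j → h i ≠ h j ∧ h i ≠ -h j) ∧
  ∀ B : AddSubgroup A, IsAddCyclic B → IsAddCyclic (A ⧸ B) →
    ∀ a : A, (∀ x : A ⧸ B, x ∈ AddSubgroup.zmultiples ((QuotientAddGroup.mk a : A ⧸ B))) →
      ∀ c : Fin 4 → ℕ, (∀ i, IsCosetNum B a (h i) (c i)) → middleTwoEq c

/-- `H` is a nonseparating subset of `A`. -/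
def IsNonseparating {A : Type*} [AddCommGroup A] (H : Set A) : Prop :=
  ∃ h : Fin 4 → A, H = (⋃ i, {h i, -h i}) ∧ NonsepTuple h

/-- `H₂ = {±(1,0), ±(0,1), ±(1,1), ±(1,3)}` is a nonseparating subset of `ℤ/4ℤ ⊕ ℤ/4ℤ`. -/
theorem stmt_8 :
    IsNonseparating ({(1, 0), -(1, 0), (0, 1), -(0, 1), (1, 1), -(1, 1), (1, 3), -(1, 3)} :
      Set (ZMod 4 × ZMod 4)) := by

  refine ⟨hT, ?_, ?_, ?_⟩
  · apply Set.ext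
    simp only [Set.mem_iUnion, Set.mem_insert_iff, Set.mem_singleton_iff]
    decide
  · decide
  · intro B hB _hQ a ha c hc
    have hBeq : ∃ b : G4, B = AddSubgroup.zmultiples b := by
      obtain ⟨g, hg⟩ := hB
      refine ⟨(g : G4), ?_⟩
      ext x
      constructor
      · intro hx
        obtain ⟨k, hk⟩ := hg ⟨x, hx⟩
        exact AddSubgroup.mem_zmultiples_iff.mpr
          ⟨k, by simpa using congrArg Subtype.val hk⟩
      · intro hx
        obtain ⟨k, hk⟩ := AddSubgroup.mem_zmultiples_iff.mp hx
        exact hk ▸ zsmul_mem g.2 k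
    obtain ⟨b, rfl⟩ := hBeq
    have hgen : Gen b a := by
      intro x
      obtain ⟨k, hk⟩ := AddSubgroup.mem_zmultiples_iff.mp (ha (QuotientAddGroup.mk x))
      have hk' : (QuotientAddGroup.mk (k • a) : G4 ⧸ AddSubgroup.zmultiples b)
          = QuotientAddGroup.mk x := by simpa using hk
      have hmem : x - k • a ∈ AddSubgroup.zmultiples b := by
        have := (QuotientAddGroup.eq_iff_sub_mem).mp hk'
        simpa using neg_mem this
      refine ⟨⟨(k % 4).toNat, toNat_lt4 k⟩, ?_⟩
      rw [← mem_zmult_iff]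
      have h2 : ((k % 4).toNat : ℕ) • a = k • a := (zsmul_red a k).symm
      simpa [h2] using hmem
    have hNc : Nat.card (G4 ⧸ AddSubgroup.zmultiples b) = 16 / nb b := quot_card b
    have hm9 : (16 / nb b) / 2 < 9 := by
      have h1 : 16 / nb b ≤ 16 := Nat.div_le_self _ _
      omega
    have hci : ∀ i, c i ≤ (16 / nb b) / 2 := fun i => hNc ▸ (hc i).1
    have hlt : ∀ i, c i < 9 := fun i => lt_of_le_of_lt (hci i) (by omega)
    have hcnd : ∀ i, (mem4 b (hT i - c i • a) ∨ mem4 b (hT i + c i • a)) :=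
      fun i => ((hc i).2).imp (mem_zmult_iff b _).mp (mem_zmult_iff b _).mp
    have key := pmain b a hgen ⟨(16 / nb b) / 2, hm9⟩ rfl
      ⟨c 0, hlt 0⟩ ⟨hci 0, hcnd 0⟩ ⟨c 1, hlt 1⟩ ⟨hci 1, hcnd 1⟩
      ⟨c 2, hlt 2⟩ ⟨hci 2, hcnd 2⟩ ⟨c 3, hlt 3⟩ ⟨hci 3, hcnd 3⟩
    exact (middleTwoEq_iff c).mpr key
end

section
/- Let A be a finite abelian group, H a nonseparating subset of A, φ : A → A a group automorphism, and h an element of order 2 in A. Then φ(H) + h is a nonseparating subset of A. -/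
lemma sortFour' (s : Multiset ℕ) (a b c d : ℕ) (hs : s = ↑[a, b, c, d])
    (h1 : a ≤ b) (h2 : b ≤ c) (h3 : c ≤ d) :
    Multiset.sort s (· ≤ ·) = [a, b, c, d] := by
  refine List.Perm.eq_of_pairwise' (Multiset.pairwise_sort _ _) ?_
    (Multiset.coe_eq_coe.mp (by rw [Multiset.sort_eq, hs]))
  simp only [List.pairwise_cons, List.mem_cons, List.mem_singleton, List.not_mem_nil,
    List.Pairwise.nil, and_true]
  constructor
  · rintro b' (rfl | rfl | rfl | h) <;> first | omega | cases h
  constructor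
  · rintro b' (rfl | rfl | h) <;> first | omega | cases h
  constructor
  · rintro b' (rfl | h) <;> first | omega | cases h
  simp

lemma middleTwoEq_of_sub (N : ℕ) (c : Fin 4 → ℕ) (hcN : ∀ i, c i ≤ N)
    (H : middleTwoEq fun i => N - c i) : middleTwoEq c := by
  set L := Multiset.sort ({c 0, c 1, c 2, c 3} : Multiset ℕ) (· ≤ ·) with hLdef
  have hlen : L.length = 4 := by rw [hLdef, Multiset.length_sort]; rfl
  clear_value L
  rcases L with _ | ⟨x0, _ | ⟨x1, _ | ⟨x2, _ | ⟨x3, _ | ⟨x4, L⟩⟩⟩⟩⟩ <;>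
    simp only [List.length] at hlen <;> try omega
  have hmem : ∀ x ∈ [x0, x1, x2, x3], x ≤ N := by
    intro x hx
    have : x ∈ ({c 0, c 1, c 2, c 3} : Multiset ℕ) := by
      rw [← Multiset.mem_sort (r := (· ≤ ·)), ← hLdef]; exact hx
    simp only [Multiset.insert_eq_cons, Multiset.mem_cons, Multiset.mem_singleton] at this
    rcases this with rfl | rfl | rfl | rfl <;> apply hcN
  have hx0 : x0 ≤ N := hmem _ (by simp)
  have hx1 : x1 ≤ N := hmem _ (by simp)
  have hx2 : x2 ≤ N := hmem _ (by simp)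
  have hx3 : x3 ≤ N := hmem _ (by simp)
  have hsorted : List.Pairwise (· ≤ ·) [x0, x1, x2, x3] := hLdef ▸ Multiset.pairwise_sort ({c 0, c 1, c 2, c 3} : Multiset ℕ) (· ≤ ·)
  simp only [List.pairwise_cons, List.mem_cons, List.mem_singleton, List.not_mem_nil] at hsorted
  have h01 : x0 ≤ x1 := hsorted.1 _ (Or.inl rfl)
  have h12 : x1 ≤ x2 := hsorted.2.1 _ (Or.inl rfl)
  have h23 : x2 ≤ x3 := hsorted.2.2.1 _ (Or.inl rfl)
  have hms : ({c 0, c 1, c 2, c 3} : Multiset ℕ) = ↑[x0, x1, x2, x3] := by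
    rw [← Multiset.sort_eq ({c 0, c 1, c 2, c 3} : Multiset ℕ) (· ≤ ·), ← hLdef]
  have hms2 : ({N - c 0, N - c 1, N - c 2, N - c 3} : Multiset ℕ)
      = ↑[N - x3, N - x2, N - x1, N - x0] := by
    have e1 : ({N - c 0, N - c 1, N - c 2, N - c 3} : Multiset ℕ)
        = Multiset.map (N - ·) ({c 0, c 1, c 2, c 3} : Multiset ℕ) := by simp
    rw [e1, hms]
    rw [show (Multiset.map (N - ·) (↑[x0, x1, x2, x3] : Multiset ℕ))
      = (↑[N - x0, N - x1, N - x2, N - x3] : Multiset ℕ) from by simp]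
    exact Multiset.coe_eq_coe.mpr (by
      have := List.reverse_perm [N - x0, N - x1, N - x2, N - x3]
      simpa using this.symm)
  have hsort2 : Multiset.sort ({N - c 0, N - c 1, N - c 2, N - c 3} : Multiset ℕ) (· ≤ ·)
      = [N - x3, N - x2, N - x1, N - x0] :=
    sortFour' _ _ _ _ _ hms2 (Nat.sub_le_sub_left h23 N) (Nat.sub_le_sub_left h12 N)
      (Nat.sub_le_sub_left h01 N)
  unfold middleTwoEq at H ⊢
  simp only at H
  rw [hsort2] at H
  rw [← hLdef]
  simp only [List.getD] at H ⊢
  simp at H ⊢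
  omega


/-- If `H` is a nonseparating subset of a finite abelian group `A`, `φ` an automorphism of
`A` and `h` an element of order 2, then `φ(H) + h` is nonseparating. -/
theorem stmt_9 {A : Type*} [AddCommGroup A] [Finite A] (H : Set A)
    (hH : IsNonseparating H) (φ : A ≃+ A) (h : A) (hh : addOrderOf h = 2) :
    IsNonseparating ((fun x => φ x + h) '' H) := by
  obtain ⟨t, rfl, htdis, htcond⟩ := hH
  have h2 : h + h = 0 := by
    have := addOrderOf_nsmul_eq_zero h
    rw [hh, two_nsmul] at this
    exact this
  have hneg : -h = h := by
    rw [neg_eq_iff_add_eq_zero, h2]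
  refine ⟨fun i => φ (t i) + h, ?_, ?_, ?_⟩
  · rw [Set.image_iUnion]
    refine Set.iUnion_congr fun i => ?_
    rw [Set.image_insert_eq, Set.image_singleton]
    have : φ (-t i) + h = -(φ (t i) + h) := by
      rw [map_neg, neg_add, hneg]
    rw [this]
  · intro i j hij
    obtain ⟨h1, h2'⟩ := htdis i j hij
    constructor
    · intro hEq
      replace hEq : φ (t i) + h = φ (t j) + h := hEq
      exact h1 (φ.injective (add_right_cancel hEq))
    · intro hEq
      replace hEq : φ (t i) + h = -(φ (t j) + h) := hEq
      apply h2'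
      apply φ.injective
      rw [map_neg]
      have : φ (t i) + h = -(φ (t j)) + h := by
        rw [hEq, neg_add, hneg]
      exact add_right_cancel this
  · intro B hBcyc hQcyc a hagen c hc
    replace hc : ∀ i, IsCosetNum B a (φ (t i) + h) (c i) := hc
    set B' : AddSubgroup A := B.map φ.symm.toAddMonoidHom with hB'def
    have hmemB' : ∀ x : A, x ∈ B' ↔ φ x ∈ B := by
      intro x
      rw [hB'def, AddSubgroup.mem_map_equiv]
      simp
    have hmap : B.map (φ.symm : A →+ A) = B' := rfl
    set e : (A ⧸ B) ≃+ (A ⧸ B') := QuotientAddGroup.congr B B' φ.symm hmap with hedef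
    have he : ∀ x : A, e (QuotientAddGroup.mk x) = QuotientAddGroup.mk (φ.symm x) :=
      fun x => rfl
    set a' := φ.symm a with ha'def
    have hB'cyc : IsAddCyclic B' := by
      haveI := hBcyc
      have e2 := φ.symm.addSubgroupMap B
      exact isAddCyclic_of_surjective e2 e2.surjective
    have hQ'cyc : IsAddCyclic (A ⧸ B') := by
      haveI := hQcyc
      exact isAddCyclic_of_surjective e e.surjective
    have hagen' : ∀ x : A ⧸ B',
        x ∈ AddSubgroup.zmultiples ((QuotientAddGroup.mk a' : A ⧸ B')) := by
      intro x
      obtain ⟨y, rfl⟩ := e.surjective x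
      obtain ⟨k, hk⟩ := AddSubgroup.mem_zmultiples_iff.mp (hagen y)
      refine AddSubgroup.mem_zmultiples_iff.mpr ⟨k, ?_⟩
      rw [← hk, map_zsmul, he]
    have hncard : Nat.card (A ⧸ B') = Nat.card (A ⧸ B) := Nat.card_congr e.symm.toEquiv
    set n := Nat.card (A ⧸ B) with hndef
    have hnpos : 0 < n := Nat.card_pos
    have hord : addOrderOf (QuotientAddGroup.mk a : A ⧸ B) = n := by
      have htop : AddSubgroup.zmultiples (QuotientAddGroup.mk a : A ⧸ B) = ⊤ :=
        (AddSubgroup.eq_top_iff' _).mpr hagen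
      calc addOrderOf (QuotientAddGroup.mk a : A ⧸ B)
          = Nat.card (AddSubgroup.zmultiples (QuotientAddGroup.mk a : A ⧸ B)) :=
            (Nat.card_zmultiples _).symm
        _ = n := by rw [htop]; exact Nat.card_congr AddSubgroup.topEquiv.toEquiv
    clear_value n
    have hmem' : ∀ (x : A) (k : ℕ),
        (φ x - k • a ∈ B → x - k • a' ∈ B') ∧ (φ x + k • a ∈ B → x + k • a' ∈ B') := by
      intro x k
      constructor <;> intro hx <;> rw [hmemB'] <;>
        simpa [map_nsmul, ha'def] using hx
    by_cases hhB : h ∈ B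
    · apply htcond B' hB'cyc hQ'cyc a' hagen' c
      intro i
      obtain ⟨hci, hmem⟩ := hc i
      refine ⟨by rw [hncard, hndef]; exact hci, ?_⟩
      rcases hmem with hm | hm
      · left
        apply (hmem' _ _).1
        have hEq : φ (t i) - c i • a = (φ (t i) + h - c i • a) - h := by abel
        rw [hEq]; exact sub_mem hm hhB
      · right
        apply (hmem' _ _).2
        have hEq : φ (t i) + c i • a = (φ (t i) + h + c i • a) - h := by abel
        rw [hEq]; exact sub_mem hm hhB
    · obtain ⟨k, hk⟩ := AddSubgroup.mem_zmultiples_iff.mp (hagen (QuotientAddGroup.mk h))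
      have hkn : ((k % (n : ℤ)) • (QuotientAddGroup.mk a : A ⧸ B)) = QuotientAddGroup.mk h := by
        rw [← hord, mod_addOrderOf_zsmul, hk]
      set m : ℕ := (k % (n : ℤ)).toNat with hmdef
      have hmod1 : (k % (n : ℤ)) = (m : ℤ) := by
        rw [hmdef, Int.toNat_of_nonneg (Int.emod_nonneg k (by exact_mod_cast hnpos.ne'))]
      have hmltn : m < n := by
        have h2' := Int.emod_lt_of_pos k (show (0:ℤ) < (n:ℤ) by exact_mod_cast hnpos)
        omega
      clear_value m
      have hma : (m • (QuotientAddGroup.mk a : A ⧸ B)) = QuotientAddGroup.mk h := by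
        rw [← natCast_zsmul, ← hmod1, hkn]
      have hm0 : m ≠ 0 := by
        intro h0
        apply hhB
        rw [← QuotientAddGroup.eq_zero_iff, ← hma, h0, zero_nsmul]
      have h2m : n = 2 * m := by
        have h2a : (2 * m) • (QuotientAddGroup.mk a : A ⧸ B) = 0 := by
          rw [mul_comm 2 m, mul_nsmul, hma, two_nsmul, ← QuotientAddGroup.mk_add, h2,
            QuotientAddGroup.mk_zero]
        have hdvd : n ∣ 2 * m := by
          rw [← hord]
          exact addOrderOf_dvd_of_nsmul_eq_zero h2a
        obtain ⟨q, hq⟩ := hdvd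
        have hq2 : q < 2 := by
          by_contra hcon
          push_neg at hcon
          have hge : n * 2 ≤ n * q := Nat.mul_le_mul_left n hcon
          omega
        interval_cases q <;> omega
      have hcile : ∀ i, c i ≤ m := by
        intro i
        have := (hc i).1
        omega
      have hhm : h - m • a ∈ B := by
        rw [← QuotientAddGroup.eq_zero_iff]
        have : (QuotientAddGroup.mk (h - m • a) : A ⧸ B)
            = QuotientAddGroup.mk h - m • QuotientAddGroup.mk a := by
          rw [QuotientAddGroup.mk_sub, QuotientAddGroup.mk_nsmul]
        rw [this, ← hma, sub_self]
      have hna : (n • a : A) ∈ B := by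
        rw [← QuotientAddGroup.eq_zero_iff]
        have : (QuotientAddGroup.mk (n • a) : A ⧸ B) = n • QuotientAddGroup.mk a := by
          rw [QuotientAddGroup.mk_nsmul]
        rw [this, ← hord]
        exact addOrderOf_nsmul_eq_zero _
      apply middleTwoEq_of_sub m c hcile
      apply htcond B' hB'cyc hQ'cyc a' hagen' (fun i => m - c i)
      intro i
      obtain ⟨hci, hmem⟩ := hc i
      have hsub : (m - c i) • a = m • a - c i • a := by
        rw [eq_sub_iff_add_eq, ← add_nsmul, Nat.sub_add_cancel (hcile i)]
      constructor
      · show m - c i ≤ Nat.card (A ⧸ B') / 2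
        rw [hncard]
        omega
      show t i - (m - c i) • a' ∈ B' ∨ t i + (m - c i) • a' ∈ B'
      rcases hmem with hm | hm
      · right
        apply (hmem' _ _).2
        have hEq : φ (t i) + (m - c i) • a = (φ (t i) + h - c i • a) - (h - m • a) := by
          rw [hsub]; abel
        rw [hEq]; exact sub_mem hm hhm
      · left
        apply (hmem' _ _).1
        have hna2 : (n • a : A) = m • a + m • a := by
          rw [h2m, two_mul, add_nsmul]
        have hEq : φ (t i) - (m - c i) • a
            = (φ (t i) + h + c i • a) - (h - m • a) - n • a := by
          rw [hsub, hna2]; abel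
        rw [hEq]; exact sub_mem (sub_mem hm hhm) hna
end

section
/- Let k ≥ 3 be an integer, A = ℤ/2^k ℤ ⊕ ℤ/2ℤ, and H = {±(1,0), ±(2^{k−2},0), ±(2^{k−2},1), ±(2^{k−1}−1,0)}. Then H is a nonseparating subset of A. -/
section helpers
variable {G : Type*} [AddCommGroup G]

private lemma nmul_g_zero (g : G) (m : ℤ) : ((addOrderOf g : ℤ) * m) • g = 0 := by
  rw [mul_comm, mul_zsmul, natCast_zsmul, addOrderOf_nsmul_eq_zero, smul_zero]

private lemma rep_lem (g : G) (hg : 0 < addOrderOf g) (x : G) (hx : x ∈ AddSubgroup.zmultiples g) :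
    ∃ d : ℕ, d < addOrderOf g ∧ x = d • g := by
  obtain ⟨t, ht⟩ := AddSubgroup.mem_zmultiples_iff.mp hx
  have hN0 : (0:ℤ) < (addOrderOf g : ℤ) := by exact_mod_cast hg
  refine ⟨(t % addOrderOf g).toNat, ?_, ?_⟩
  · have := Int.emod_lt_of_pos t hN0
    omega
  · have h1 : ((t % (addOrderOf g : ℤ)).toNat : ℤ) = t % addOrderOf g :=
      Int.toNat_of_nonneg (Int.emod_nonneg t (by omega))
    rw [← ht, ← natCast_zsmul, h1]
    have h3 : t • g = ((addOrderOf g : ℤ) * (t / addOrderOf g)) • g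
        + (t % (addOrderOf g : ℤ)) • g := by
      rw [← add_zsmul, Int.mul_ediv_add_emod]
    rw [h3, nmul_g_zero, zero_add]

private lemma two_torsion (g : G) (s : ℤ) (h2 : s • g + s • g = 0) :
    s • g = 0 ∨ (2 * (addOrderOf g / 2) = addOrderOf g ∧ s • g = (addOrderOf g / 2) • g) := by
  have hdvd : ((addOrderOf g : ℤ)) ∣ 2 * s := by
    rw [addOrderOf_dvd_iff_zsmul_eq_zero, two_mul, add_zsmul]
    exact h2
  obtain ⟨u, hu⟩ := hdvd
  rcases Int.even_or_odd u with ⟨m, hm⟩ | ⟨m, hm⟩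
  · left
    have hs : s = (addOrderOf g : ℤ) * m := by
      have hw : (addOrderOf g : ℤ) * u = (addOrderOf g : ℤ) * m + (addOrderOf g : ℤ) * m := by
        rw [hm]; ring
      set w := (addOrderOf g : ℤ) * m
      omega
    rw [hs, nmul_g_zero]
  · right
    have key : (addOrderOf g : ℤ) * u = 2 * ((addOrderOf g : ℤ) * m) + addOrderOf g := by
      rw [hm]; ring
    have hNeven : (2:ℕ) ∣ addOrderOf g := by
      have : ((2:ℤ)) ∣ (addOrderOf g : ℤ) := ⟨s - (addOrderOf g : ℤ) * m, by
        set w := (addOrderOf g : ℤ) * m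
        omega⟩
      exact_mod_cast this
    have hNe : 2 * (addOrderOf g / 2) = addOrderOf g := by omega
    refine ⟨hNe, ?_⟩
    have hs : s = (addOrderOf g : ℤ) * m + ((addOrderOf g / 2 : ℕ) : ℤ) := by
      have h2' : ((addOrderOf g / 2 : ℕ) : ℤ) * 2 = (addOrderOf g : ℤ) := by omega
      set w := (addOrderOf g : ℤ) * m
      omega
    rw [hs, add_zsmul, nmul_g_zero, zero_add, natCast_zsmul]

private lemma two_torsion_nat (g : G) (s : ℕ) (h2 : s • g + s • g = 0) :
    s • g = 0 ∨ (2 * (addOrderOf g / 2) = addOrderOf g ∧ s • g = (addOrderOf g / 2) • g) := by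
  have := two_torsion g (s:ℤ) (by rw [natCast_zsmul]; exact h2)
  rwa [natCast_zsmul] at this

private lemma smul_inj_lem (g : G) (hg : 0 < addOrderOf g) (x y : ℕ)
    (hx : x ≤ addOrderOf g / 2) (hy : y ≤ addOrderOf g / 2)
    (h : x • g = y • g ∨ x • g = -(y • g)) : x = y := by
  rcases h with h | h
  · have hdvd : ((addOrderOf g : ℤ)) ∣ (x:ℤ) - y := by
      rw [addOrderOf_dvd_iff_zsmul_eq_zero, sub_zsmul, natCast_zsmul, natCast_zsmul, h]
      simp
    have h0 : (x:ℤ) - y = 0 := Int.eq_zero_of_abs_lt_dvd hdvd (abs_lt.mpr ⟨by omega, by omega⟩)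
    omega
  · have hdvd : ((addOrderOf g : ℤ)) ∣ (x:ℤ) + y := by
      rw [addOrderOf_dvd_iff_zsmul_eq_zero, add_zsmul, natCast_zsmul, natCast_zsmul, h]
      simp
    have hdvd' : addOrderOf g ∣ x + y := by exact_mod_cast hdvd
    rcases Nat.eq_zero_or_pos (x + y) with h0 | h0
    · omega
    · have := Nat.le_of_dvd h0 hdvd'
      obtain ⟨u, hu⟩ := hdvd'
      rcases u with _ | _ | u
      · omega
      · omega
      · have : addOrderOf g * 2 ≤ addOrderOf g * (u + 2) := by
          apply Nat.mul_le_mul_left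
          omega
        omega

private lemma cyclic_two_torsion {H : Type*} [AddCommGroup H] [Finite H] (hH : IsAddCyclic H)
    (x y : H) (hx : x + x = 0) (hy : y + y = 0) (hx0 : x ≠ 0) (hy0 : y ≠ 0) : x = y := by
  obtain ⟨g, hg⟩ := hH
  obtain ⟨s, hs⟩ := hg x
  obtain ⟨t, ht⟩ := hg y
  replace hs : s • g = x := hs
  replace ht : t • g = y := ht
  rcases two_torsion g s (by rw [hs]; exact hx) with h | ⟨_, h⟩
  · exact absurd (hs ▸ h) hx0
  rcases two_torsion g t (by rw [ht]; exact hy) with h' | ⟨_, h'⟩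
  · exact absurd (ht ▸ h') hy0
  rw [← hs, ← ht, h, h']
end helpers

private lemma sortlem (p v q : ℕ) (h1 : p ≤ v) (h2 : v ≤ q) :
    Multiset.sort ({p, v, v, q} : Multiset ℕ) (· ≤ ·) = [p, v, v, q] := by
  apply List.Perm.eq_of_pairwise' (Multiset.pairwise_sort _ _) ?_ (Multiset.coe_eq_coe.mp ?_)
  · simp [List.pairwise_cons]; omega
  · rw [Multiset.sort_eq]; rfl

private lemma midKey (c : Fin 4 → ℕ) (p v q : ℕ)
    (hM : ({c 0, c 1, c 2, c 3} : Multiset ℕ) = {p, v, v, q})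
    (h1 : p ≤ v) (h2 : v ≤ q) : middleTwoEq c := by
  unfold middleTwoEq; rw [hM, sortlem p v q h1 h2]; rfl

private lemma midA (c : Fin 4 → ℕ) (hv : c 1 = c 2) (h1 : min (c 0) (c 3) ≤ c 1)
    (h2 : c 1 ≤ max (c 0) (c 3)) : middleTwoEq c := by
  rcases le_total (c 0) (c 3) with h | h
  · refine midKey c (c 0) (c 1) (c 3) ?_ (by omega) (by omega)
    refine Multiset.ext.mpr fun e => ?_
    simp only [Multiset.count_cons, Multiset.insert_eq_cons, Multiset.count_singleton, ← hv] <;>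
      first | omega | (split_ifs <;> omega)
  · refine midKey c (c 3) (c 1) (c 0) ?_ (by omega) (by omega)
    refine Multiset.ext.mpr fun e => ?_
    simp only [Multiset.count_cons, Multiset.insert_eq_cons, Multiset.count_singleton, ← hv] <;>
      first | omega | (split_ifs <;> omega)

private lemma midB (c : Fin 4 → ℕ) (hv : c 0 = c 3) (h1 : min (c 1) (c 2) ≤ c 0)
    (h2 : c 0 ≤ max (c 1) (c 2)) : middleTwoEq c := by
  rcases le_total (c 1) (c 2) with h | h
  · refine midKey c (c 1) (c 0) (c 2) ?_ (by omega) (by omega)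
    refine Multiset.ext.mpr fun e => ?_
    simp only [Multiset.count_cons, Multiset.insert_eq_cons, Multiset.count_singleton, ← hv] <;>
      first | omega | (split_ifs <;> omega)
  · refine midKey c (c 2) (c 0) (c 1) ?_ (by omega) (by omega)
    refine Multiset.ext.mpr fun e => ?_
    simp only [Multiset.count_cons, Multiset.insert_eq_cons, Multiset.count_singleton, ← hv] <;>
      first | omega | (split_ifs <;> omega)

/-- For `k ≥ 3`, `H = {±(1,0), ±(2^(k-2),0), ±(2^(k-2),1), ±(2^(k-1)-1,0)}` is a
nonseparating subset of `ℤ/2^kℤ ⊕ ℤ/2ℤ`. -/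
theorem stmt_12 (k : ℕ) (hk : 3 ≤ k) :
    IsNonseparating ({(1, 0), -(1, 0), (2 ^ (k - 2), 0), -(2 ^ (k - 2), 0),
      (2 ^ (k - 2), 1), -(2 ^ (k - 2), 1), (2 ^ (k - 1) - 1, 0), -(2 ^ (k - 1) - 1, 0)} :
      Set (ZMod (2 ^ k) × ZMod 2)) := by
  haveI : NeZero (2^k) := ⟨pow_ne_zero k two_ne_zero⟩
  have hP2 : 2 ≤ 2^(k-2) := by
    calc 2 = 2^1 := rfl
    _ ≤ 2^(k-2) := Nat.pow_le_pow_right (by omega) (by omega)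
  have hP1 : 2^(k-1) = 2 * 2^(k-2) := by
    rw [← pow_succ']
    congr 1
    omega
  have hPk : 2^k = 4 * 2^(k-2) := by
    have : (4:ℕ) = 2^2 := rfl
    rw [this, ← pow_add]
    congr 1
    omega
  set M := ZMod (2^k) with hM
  -- cast normalizations
  have e1 : ((2:M)^(k-2)) = ((2^(k-2) : ℕ) : M) := by push_cast; ring
  have e1' : ((2:M)^(k-1)) = ((2^(k-1) : ℕ) : M) := by push_cast; ring
  have e2 : ((2:M)^(k-1) - 1) = ((2^(k-1) - 1 : ℕ) : M) := by
    rw [Nat.cast_sub (Nat.one_le_two_pow), Nat.cast_one, e1']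
  have castne : ∀ u v : ℕ, u < 2^k → v < 2^k → u ≠ v → ((u : M) ≠ (v : M)) := by
    intro u v hu hv huv heq
    apply huv
    have := congrArg ZMod.val heq
    rwa [ZMod.val_cast_of_lt hu, ZMod.val_cast_of_lt hv] at this
  have sumne : ∀ u v : ℕ, 0 < u + v → u + v < 2^k → ((u : M) ≠ -(v : M)) := by
    intro u v h0 hlt heq
    have hz : ((u + v : ℕ) : M) = 0 := by
      push_cast
      rw [heq]
      ring
    have := (ZMod.natCast_eq_zero_iff _ _).mp hz
    have := Nat.le_of_dvd h0 this
    omega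
  set h : Fin 4 → M × ZMod 2 :=
    ![((1:M), (0:ZMod 2)), ((2^(k-2) : M), (0:ZMod 2)),
      ((2^(k-2) : M), (1:ZMod 2)), ((2^(k-1) - 1 : M), (0:ZMod 2))] with hh
  refine ⟨h, ?_, ?_, ?_⟩
  · -- set equality
    ext z
    simp only [Set.mem_insert_iff, Set.mem_singleton_iff, Set.mem_iUnion]
    constructor
    · rintro (rfl|rfl|rfl|rfl|rfl|rfl|rfl|rfl)
      exacts [⟨0, Or.inl rfl⟩, ⟨0, Or.inr rfl⟩, ⟨1, Or.inl rfl⟩, ⟨1, Or.inr rfl⟩,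
        ⟨2, Or.inl rfl⟩, ⟨2, Or.inr rfl⟩, ⟨3, Or.inl rfl⟩, ⟨3, Or.inr rfl⟩]
    · rintro ⟨i, hi⟩
      fin_cases i <;> rcases hi with rfl | rfl <;> tauto
  · -- distinctness
    have negswap : ∀ {x y : M × ZMod 2}, x ≠ -y → y ≠ -x := by
      intro x y hxy h'
      exact hxy (by rw [h', neg_neg])
    have F01a : ((1:M), (0:ZMod 2)) ≠ ((2^(k-2) : M), (0:ZMod 2)) := by
      intro hp
      have h1 := congrArg Prod.fst hp
      simp only at h1
      rw [e1] at h1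
      exact castne 1 (2^(k-2)) (by omega) (by omega) (by omega) (by exact_mod_cast h1)
    have F01b : ((1:M), (0:ZMod 2)) ≠ -((2^(k-2) : M), (0:ZMod 2)) := by
      intro hp
      have h1 := congrArg Prod.fst hp
      simp only [Prod.fst_neg] at h1
      rw [e1] at h1
      exact sumne 1 (2^(k-2)) (by omega) (by omega) (by exact_mod_cast h1)
    have F03a : ((1:M), (0:ZMod 2)) ≠ ((2^(k-1) - 1 : M), (0:ZMod 2)) := by
      intro hp
      have h1 := congrArg Prod.fst hp
      simp only at h1
      rw [e2] at h1
      exact castne 1 (2^(k-1) - 1) (by omega) (by omega) (by omega) (by exact_mod_cast h1)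
    have F03b : ((1:M), (0:ZMod 2)) ≠ -((2^(k-1) - 1 : M), (0:ZMod 2)) := by
      intro hp
      have h1 := congrArg Prod.fst hp
      simp only [Prod.fst_neg] at h1
      rw [e2] at h1
      exact sumne 1 (2^(k-1) - 1) (by omega) (by omega) (by exact_mod_cast h1)
    have F13a : ((2^(k-2):M), (0:ZMod 2)) ≠ ((2^(k-1) - 1 : M), (0:ZMod 2)) := by
      intro hp
      have h1 := congrArg Prod.fst hp
      simp only at h1
      rw [e1, e2] at h1
      exact castne (2^(k-2)) (2^(k-1) - 1) (by omega) (by omega) (by omega) h1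
    have F13b : ((2^(k-2):M), (0:ZMod 2)) ≠ -((2^(k-1) - 1 : M), (0:ZMod 2)) := by
      intro hp
      have h1 := congrArg Prod.fst hp
      simp only [Prod.fst_neg] at h1
      rw [e1, e2] at h1
      exact sumne (2^(k-2)) (2^(k-1) - 1) (by omega) (by omega) h1
    have Ga : ∀ (x y : M), (x, (0:ZMod 2)) ≠ (y, (1:ZMod 2)) :=
      fun x y hp => (by decide : ¬((0:ZMod 2) = 1)) (congrArg Prod.snd hp)
    have Gb : ∀ (x y : M), (x, (0:ZMod 2)) ≠ -(y, (1:ZMod 2)) :=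
      fun x y hp => (by decide : ¬((0:ZMod 2) = -1)) (congrArg Prod.snd hp)
    have Gc : ∀ (x y : M), (x, (1:ZMod 2)) ≠ (y, (0:ZMod 2)) :=
      fun x y hp => (by decide : ¬((1:ZMod 2) = 0)) (congrArg Prod.snd hp)
    have Gd : ∀ (x y : M), (x, (1:ZMod 2)) ≠ -(y, (0:ZMod 2)) :=
      fun x y hp => (by decide : ¬((1:ZMod 2) = -0)) (congrArg Prod.snd hp)
    intro i j hij
    fin_cases i <;> fin_cases j <;>
      first
        | exact absurd rfl hij
        | exact ⟨F01a, F01b⟩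
        | exact ⟨F01a.symm, negswap F01b⟩
        | exact ⟨F03a, F03b⟩
        | exact ⟨F03a.symm, negswap F03b⟩
        | exact ⟨F13a, F13b⟩
        | exact ⟨F13a.symm, negswap F13b⟩
        | exact ⟨Ga _ _, Gb _ _⟩
        | exact ⟨Gc _ _, Gd _ _⟩
  · -- main part
    intro B hBcyc hQcyc a ha c hc
    haveI : Finite ((M × ZMod 2) ⧸ B) := Quotient.finite _
    set π := QuotientAddGroup.mk' B with hπdef
    set abar : (M × ZMod 2) ⧸ B := π a with hadef
    set n := addOrderOf abar with hndef
    have htop : ∀ x : (M × ZMod 2) ⧸ B, x ∈ AddSubgroup.zmultiples abar := ha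
    have hn : 0 < n := addOrderOf_pos abar
    have hzt : AddSubgroup.zmultiples abar = ⊤ := by
      rw [AddSubgroup.eq_top_iff']
      exact htop
    have hcard : Nat.card ((M × ZMod 2) ⧸ B) = n := by
      rw [hndef, ← Nat.card_zmultiples abar, hzt]
      exact AddSubgroup.card_top.symm
    have hbound : ∀ i, c i ≤ n / 2 := by
      intro i
      have := (hc i).1
      rwa [hcard] at this
    have hval : ∀ i, π (h i) = (c i) • abar ∨ π (h i) = -((c i) • abar) := by
      intro i
      rcases (hc i).2 with hm | hm
      · left
        have h0 : π (h i - (c i) • a) = 0 := (QuotientAddGroup.eq_zero_iff _).mpr hm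
        rwa [map_sub, map_nsmul, sub_eq_zero] at h0
      · right
        have h0 : π (h i + (c i) • a) = 0 := (QuotientAddGroup.eq_zero_iff _).mpr hm
        rw [map_add, map_nsmul] at h0
        exact eq_neg_of_add_eq_zero_left h0
    have getc : ∀ (i : Fin 4) (e : ℕ), e ≤ n / 2 →
        (π (h i) = e • abar ∨ π (h i) = -(e • abar)) → c i = e := by
      intro i e he hrel
      apply smul_inj_lem abar hn _ _ (hbound i) he
      rcases hval i with h1 | h1 <;> rcases hrel with h2 | h2
      · rw [h2] at h1
        exact Or.inl h1.symm
      · rw [h2] at h1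
        exact Or.inr h1.symm
      · rw [h2] at h1
        exact Or.inr (neg_eq_iff_eq_neg.mp h1.symm)
      · rw [h2] at h1
        exact Or.inl (neg_inj.mp h1).symm
    -- generalize P
    obtain ⟨P, hPdef⟩ : ∃ P, 2^(k-2) = P := ⟨_, rfl⟩
    rw [hPdef] at hP2 hPk hP1 e1
    rw [hP1] at e2
    -- basic elements
    set α' : (M × ZMod 2) ⧸ B := π ((1:M), (0:ZMod 2)) with hα'def
    set β' : (M × ZMod 2) ⧸ B := π ((0:M), (1:ZMod 2)) with hβ'def
    have hsm : ∀ u : ℕ, (u • ((1:M), (0:ZMod 2)) : M × ZMod 2) = ((u : M), (0:ZMod 2)) := by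
      intro u
      refine Prod.ext ?_ ?_
      · show u • (1:M) = ((u:ℕ) : M)
        rw [nsmul_eq_mul, mul_one]
      · show u • (0:ZMod 2) = 0
        rw [smul_zero]
    have hπ0 : π (h 0) = α' := rfl
    have hh1 : h 1 = (P : ℕ) • ((1:M), (0:ZMod 2)) := by
      show ((2^(k-2) : M), (0:ZMod 2)) = _
      rw [hsm, e1]
    have hπ1 : π (h 1) = (P : ℕ) • α' := by rw [hh1, map_nsmul]
    have hh3 : h 3 = (2*P - 1 : ℕ) • ((1:M), (0:ZMod 2)) := by
      show ((2^(k-1) - 1 : M), (0:ZMod 2)) = _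
      rw [hsm, e2]
    have hπ3 : π (h 3) = (2*P - 1 : ℕ) • α' := by rw [hh3, map_nsmul]
    have hh2 : h 2 = (P : ℕ) • ((1:M), (0:ZMod 2)) + ((0:M), (1:ZMod 2)) := by
      show ((2^(k-2) : M), (1:ZMod 2)) = _
      rw [hsm]
      refine Prod.ext ?_ ?_
      · show (2^(k-2) : M) = ((P:ℕ) : M) + 0
        rw [e1, add_zero]
      · show (1 : ZMod 2) = 0 + 1
        rw [zero_add]
    have hπ2 : π (h 2) = (P : ℕ) • α' + β' := by rw [hh2, map_add, map_nsmul]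
    have hβtor : β' + β' = 0 := by
      have hz : ((0:M), (1:ZMod 2)) + ((0:M), (1:ZMod 2)) = (0 : M × ZMod 2) := by
        refine Prod.ext ?_ ?_
        · show (0:M) + 0 = 0
          rw [add_zero]
        · show (1:ZMod 2) + 1 = 0
          decide
      rw [hβ'def, ← map_add, hz, map_zero]
    have hnabar : n • abar = 0 := addOrderOf_nsmul_eq_zero abar
    have hnx : ∀ x : (M × ZMod 2) ⧸ B, n • x = 0 := by
      intro x
      obtain ⟨d, -, rfl⟩ := rep_lem abar hn x (htop x)
      rw [smul_smul, mul_comm, ← smul_smul, hnabar, smul_zero]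
    have h2ka : (2^k : ℕ) • abar = 0 := by
      have ha0 : ((2^k : ℕ) • a : M × ZMod 2) = 0 := by
        refine Prod.ext ?_ ?_
        · show (2^k : ℕ) • a.1 = (0 : M)
          rw [nsmul_eq_mul, ZMod.natCast_self, zero_mul]
        · show (2^k : ℕ) • a.2 = (0 : ZMod 2)
          have hz2 : ((2^k : ℕ) : ZMod 2) = 0 :=
            (ZMod.natCast_eq_zero_iff _ _).mpr (dvd_pow_self 2 (by omega))
          rw [nsmul_eq_mul, hz2, zero_mul]
      rw [hadef, ← map_nsmul, ha0, map_zero]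
    have hdvd : n ∣ 2^k := addOrderOf_dvd_of_nsmul_eq_zero h2ka
    obtain ⟨m, hmk, hnm⟩ := (Nat.dvd_prime_pow Nat.prime_two).mp hdvd
    -- cyclicity of B
    have klein : ¬ ((2^(k-1) : ℕ) • α' = 0 ∧ β' = 0) := by
      rintro ⟨hk1, hk2⟩
      have hq1 : π ((((2^(k-1) : ℕ)) : M), (0 : ZMod 2)) = 0 := by
        rw [← hsm, map_nsmul]
        exact hk1
      have hm1 : ((((2^(k-1) : ℕ)) : M), (0 : ZMod 2)) ∈ B := (QuotientAddGroup.eq_zero_iff _).mp hq1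
      have hm2 : ((0:M), (1:ZMod 2)) ∈ B := (QuotientAddGroup.eq_zero_iff _).mp hk2
      have heq := cyclic_two_torsion hBcyc (⟨_, hm1⟩ : B) (⟨_, hm2⟩ : B) ?_ ?_ ?_ ?_
      · have h2 : ((((2^(k-1) : ℕ)) : M), (0 : ZMod 2)) = ((0:M), (1:ZMod 2)) :=
          congrArg (fun z : B => (z : M × ZMod 2)) heq
        exact (by decide : ¬((0:ZMod 2) = 1)) (congrArg Prod.snd h2)
      · apply Subtype.ext
        show ((((2^(k-1) : ℕ)) : M), (0 : ZMod 2)) + ((((2^(k-1) : ℕ)) : M), 0) = (0 : M × ZMod 2)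
        refine Prod.ext ?_ ?_
        · show (((2^(k-1) : ℕ)) : M) + (((2^(k-1) : ℕ)) : M) = 0
          rw [← Nat.cast_add, show 2^(k-1) + 2^(k-1) = 2^k by omega, ZMod.natCast_self]
        · show (0:ZMod 2) + 0 = 0
          rw [add_zero]
      · apply Subtype.ext
        show ((0:M), (1:ZMod 2)) + ((0:M), (1:ZMod 2)) = (0 : M × ZMod 2)
        refine Prod.ext ?_ ?_
        · show (0:M) + 0 = 0
          rw [add_zero]
        · show (1:ZMod 2) + 1 = 0
          decide
      · intro h0
        have h2 : ((((2^(k-1) : ℕ)) : M), (0 : ZMod 2)) = (0 : M × ZMod 2) :=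
          congrArg (fun z : B => (z : M × ZMod 2)) h0
        have h3 : (((2^(k-1) : ℕ)) : M) = ((0 : ℕ) : M) := by
          rw [Nat.cast_zero]
          exact congrArg Prod.fst h2
        exact castne (2^(k-1)) 0 (by omega) (by omega) (by omega) h3
      · intro h0
        have h2 : ((0:M), (1:ZMod 2)) = (0 : M × ZMod 2) :=
          congrArg (fun z : B => (z : M × ZMod 2)) h0
        exact (by decide : ¬((1:ZMod 2) = 0)) (congrArg Prod.snd h2)
    -- β' classification
    obtain ⟨db, hdb, hβrep⟩ := rep_lem abar hn β' (htop β')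
    have hβcase : β' = 0 ∨ (2 * (n/2) = n ∧ β' = (n/2) • abar) := by
      rcases two_torsion_nat abar db (by rw [← hβrep]; exact hβtor) with h0 | ⟨hNe, hv⟩
      · exact Or.inl (hβrep.trans h0)
      · exact Or.inr ⟨hNe, hβrep.trans hv⟩
    rcases Nat.lt_or_ge m k with hmlt | hmge
    · -- case n ∣ 2^(k-1)
      have hnd : n ∣ 2^(k-1) := by
        rw [hnm]
        exact pow_dvd_pow 2 (by omega)
      have h2k1α : (2^(k-1) : ℕ) • α' = 0 := by
        obtain ⟨u, hu⟩ := hnd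
        rw [hu, ← smul_smul]
        exact hnx _
      have hβne : β' ≠ 0 := fun h0 => klein ⟨h2k1α, h0⟩
      obtain ⟨hNe, hβval⟩ := hβcase.resolve_left hβne
      have hV2tor : (P:ℕ) • α' + (P:ℕ) • α' = 0 := by
        rw [← add_nsmul, show P + P = 2^(k-1) by omega]
        exact h2k1α
      obtain ⟨d2, hd2lt, hd2⟩ := rep_lem abar hn ((P:ℕ) • α') (htop _)
      have hV2case : (P:ℕ) • α' = 0 ∨ (P:ℕ) • α' = (n/2) • abar := by
        rcases two_torsion_nat abar d2 (by rw [← hd2]; exact hV2tor) with h0 | ⟨-, hv⟩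
        · exact Or.inl (hd2.trans h0)
        · exact Or.inr (hd2.trans hv)
      have hπ3n : π (h 3) = -α' := by
        rw [hπ3]
        apply eq_neg_of_add_eq_zero_left
        have hstep : (2*P - 1 : ℕ) • α' + (1:ℕ) • α' = ((2*P - 1) + 1) • α' := (add_nsmul α' _ _).symm
        rw [one_nsmul] at hstep
        rw [hstep, show (2*P - 1) + 1 = 2^(k-1) by omega]
        exact h2k1α
      have hc30 : c 3 = c 0 := by
        apply getc 3 (c 0) (hbound 0)
        rcases hval 0 with h1 | h1
        · right
          rw [hπ3n, ← hπ0, h1]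
        · left
          rw [hπ3n, ← hπ0, h1, neg_neg]
      rcases hV2case with hV2 | hV2
      · have hcv1 : c 1 = 0 := by
          apply getc 1 0 (by omega)
          left
          rw [hπ1, hV2, zero_nsmul]
        have hcv2 : c 2 = n/2 := by
          apply getc 2 (n/2) (le_refl _)
          left
          rw [hπ2, hV2, zero_add, hβval]
        exact midB c hc30.symm (by rw [hcv1, hcv2]; omega)
          (by rw [hcv1, hcv2]; have := hbound 0; omega)
      · have hcv1 : c 1 = n/2 := by
          apply getc 1 (n/2) (le_refl _)
          left
          rw [hπ1, hV2]
        have hcv2 : c 2 = 0 := by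
          apply getc 2 0 (by omega)
          left
          rw [hπ2, hV2, hβval, ← add_nsmul, show n/2 + n/2 = n by omega, hnabar, zero_nsmul]
        exact midB c hc30.symm (by rw [hcv1, hcv2]; omega)
          (by rw [hcv1, hcv2]; have := hbound 0; omega)
    · -- case n = 2^k
      have hmeq : m = k := le_antisymm hmk hmge
      have hn4P : n = 4*P := by rw [hnm, hmeq, hPk]
      obtain ⟨d, hd, hdα⟩ := rep_lem abar hn α' (htop α')
      have h4Pabar : (4*P) • abar = 0 := by
        rw [show 4*P = n by omega]
        exact hnabar
      have h4Ptabar : ∀ t : ℕ, (4*P*t) • abar = 0 := by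
        intro t
        rw [mul_comm, ← smul_smul, h4Pabar, smul_zero]
      -- d is odd
      rcases Nat.even_or_odd d with hEd | hOd
      · exfalso
        obtain ⟨e, hEe, hβe⟩ : ∃ e : ℕ, Even e ∧ β' = e • abar := by
          rcases hβcase with h0 | ⟨-, hv⟩
          · exact ⟨0, Even.zero, by rw [h0, zero_nsmul]⟩
          · exact ⟨n/2, ⟨P, by omega⟩, hv⟩
        have haeq : a = (a.1.val : ℕ) • ((1:M), (0:ZMod 2)) + (a.2.val : ℕ) • ((0:M), (1:ZMod 2)) := by
          refine Prod.ext ?_ ?_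
          · show a.1 = a.1.val • (1:M) + a.2.val • (0:M)
            rw [nsmul_eq_mul, mul_one, smul_zero, add_zero]
            exact (ZMod.natCast_rightInverse a.1).symm
          · show a.2 = a.1.val • (0:ZMod 2) + a.2.val • (1:ZMod 2)
            rw [smul_zero, zero_add, nsmul_eq_mul, mul_one]
            exact (ZMod.natCast_rightInverse a.2).symm
        have habar2 : abar = (a.1.val * d + a.2.val * e) • abar := by
          conv_lhs => rw [hadef, haeq]
          rw [map_add, map_nsmul, map_nsmul, ← hα'def, ← hβ'def, hdα, hβe,
            smul_smul, smul_smul, ← add_nsmul]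
        have hz : (((a.1.val * d + a.2.val * e : ℕ) : ℤ) - 1) • abar = 0 := by
          rw [sub_zsmul, natCast_zsmul, one_zsmul, ← habar2]
          simp
        have hdvd1 : (n:ℤ) ∣ ((a.1.val * d + a.2.val * e : ℕ) : ℤ) - 1 := by
          rw [hndef]
          exact addOrderOf_dvd_iff_zsmul_eq_zero.mpr hz
        obtain ⟨w, hw⟩ := hdvd1
        have hn4Pz : (n:ℤ) = 4 * (P:ℤ) := by exact_mod_cast hn4P
        have hw2 : ((a.1.val * d + a.2.val * e : ℕ) : ℤ) - 1 = 4 * ((P:ℤ) * w) := by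
          rw [hw, hn4Pz]
          ring
        have hED : Even (a.1.val * d + a.2.val * e) := (hEd.mul_left _).add (hEe.mul_left _)
        obtain ⟨r, hr⟩ := hED
        rw [hr] at hw2
        set v := (P:ℤ) * w
        omega
      obtain ⟨t, ht⟩ := hOd
      -- compute coset numbers
      have hn2P : n / 2 = 2*P := by omega
      have hπ1' : π (h 1) = (P:ℕ) • abar ∨ π (h 1) = -((P:ℕ) • abar) := by
        have hstep : π (h 1) = (2*P*t) • abar + (P:ℕ) • abar := by
          rw [hπ1, hdα, smul_smul, show P * d = 2*P*t + P by rw [ht]; ring, add_nsmul]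
        have htor : (2*P*t) • abar + (2*P*t) • abar = 0 := by
          rw [← add_nsmul, show 2*P*t + 2*P*t = 4*P*t by ring]
          exact h4Ptabar t
        obtain ⟨dy, hdylt, hdy⟩ := rep_lem abar hn ((2*P*t) • abar) (htop _)
        rcases two_torsion_nat abar dy (by rw [← hdy]; exact htor) with h0 | ⟨-, hv⟩
        · left
          rw [hstep, hdy.trans h0, zero_add]
        · right
          have hv' : (2*P*t) • abar = (2*P) • abar := by
            rw [hdy, hv, hn2P]
          rw [hstep, hv', ← add_nsmul]
          apply eq_neg_of_add_eq_zero_left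
          rw [← add_nsmul, show 2*P + P + P = 4*P by ring]
          exact h4Pabar
      have hneg3P : ((2*P + P) : ℕ) • abar = -((P:ℕ) • abar) := by
        apply eq_neg_of_add_eq_zero_left
        rw [← add_nsmul, show 2*P + P + P = 4*P by ring]
        exact h4Pabar
      have hcv1 : c 1 = P := by
        apply getc 1 P (by omega)
        exact hπ1'
      have hcv2 : c 2 = P := by
        apply getc 2 P (by omega)
        rcases hβcase with hβ0 | ⟨-, hβv⟩
        · rw [hπ2, ← hπ1, hβ0, add_zero]
          exact hπ1'
        · have hβ2P : β' = (2*P) • abar := by rw [hβv, hn2P]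
          rcases hπ1' with h1 | h1
          · right
            rw [hπ2, ← hπ1, h1, hβ2P, ← add_nsmul, show P + 2*P = 2*P + P by ring]
            exact hneg3P
          · left
            rw [hπ2, ← hπ1, h1, hβ2P, show 2*P = P + P by ring, add_nsmul, ← add_assoc,
              neg_add_cancel, zero_add]
      -- c 0 and c 3
      have hπ3d : π (h 3) + (d • abar) = (2*P) • abar := by
        rw [hπ3, hdα, smul_smul, ← add_nsmul]
        have harith : (2*P - 1) * d + d = 4*P*t + 2*P := by
          have h1 : (2*P - 1) * d + d = 2*P*d := by
            have h2 : 2*P - 1 + 1 = 2*P := by omega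
            calc (2*P - 1) * d + d = (2*P - 1 + 1) * d := by ring
            _ = 2*P*d := by rw [h2]
          rw [h1, ht]
          ring
        rw [harith, add_nsmul, h4Ptabar, zero_add]
      rcases le_total d (n - d) with hle | hle
      · have hcv0 : c 0 = d := by
          apply getc 0 d (by omega)
          left
          rw [hπ0, hdα]
        have hcv3 : c 3 = 2*P - d := by
          apply getc 3 (2*P - d) (by omega)
          left
          have hcancel : (2*P - d : ℕ) • abar + d • abar = (2*P) • abar := by
            rw [← add_nsmul, Nat.sub_add_cancel (by omega)]
          exact add_right_cancel (hπ3d.trans hcancel.symm)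
        refine midA c (by rw [hcv1, hcv2]) ?_ ?_ <;> rw [hcv0, hcv3, hcv1] <;> omega
      · have hcv0 : c 0 = n - d := by
          apply getc 0 (n - d) (by omega)
          right
          rw [hπ0, hdα]
          apply eq_neg_of_add_eq_zero_left
          rw [← add_nsmul, show d + (n - d) = n by omega]
          exact hnabar
        have hcv3 : c 3 = d - 2*P := by
          obtain ⟨q, hq⟩ : ∃ q, q = d - 2*P := ⟨_, rfl⟩
          rw [← hq]
          apply getc 3 q (by omega)
          right
          have hcancel : -(q • abar) + d • abar = (2*P) • abar := by
            rw [show d = q + 2*P by omega, add_nsmul, ← add_assoc,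
              neg_add_cancel, zero_add]
          exact add_right_cancel (hπ3d.trans hcancel.symm)
        refine midA c (by rw [hcv1, hcv2]) ?_ ?_ <;> rw [hcv0, hcv3, hcv1] <;> omega
end
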